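/- For c ∈ P and r ∈ O' (a nontrivial element of the group Π of affine Dynkin diagram automorphisms), π_r π_c = π_b where b = π_r((c)) is the image of c under the affine action of π_r. Moreover u_b = u_c u_r, b = ω_r + u_r⁻¹(c), and b_− = c_− + u_c w₀(ω_r); in particular c_− + u_c w₀(ω_r) always lies in P_−. -/

import Mathlib

open scoped RealInnerProductSpace Pointwise BigOperators

noncomputable section

/-- Euclidean `n`-space, the ambient space of the root system. -/
abbrev V (n : ℕ) := EuclideanSpace ℝ (Fin n)

/-- An element `w ∘ b'` of the extended affine Weyl group `Ŵ = W ⋉ P'`: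
`w` is the (finite) Weyl-group part, `b` the translation part. -/
structure ExtElem (n : ℕ) where
  w : V n ≃ₗᵢ[ℝ] V n
  b : V n

namespace ExtElem

variable {n : ℕ}

/-- The identity element of `Ŵ`. -/
def one : ExtElem n := ⟨LinearIsometryEquiv.refl ℝ (V n), 0⟩

/-- Multiplication in `Ŵ`: `(w₁ b₁')·(w₂ b₂') = (w₁w₂)((w₂⁻¹ b₁ + b₂)')`. -/
def mul (x y : ExtElem n) : ExtElem n := ⟨y.w.trans x.w, y.w.symm x.b + y.b⟩

/-- Inversion in `Ŵ`. -/
def inv (x : ExtElem n) : ExtElem n := ⟨x.w.symm, -(x.w x.b)⟩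

/-- The action of `Ŵ` on affine roots `[z, ζ]`:  `(w b')([z,ζ]) = [w z, ζ − (z,b)]`. -/
def act (x : ExtElem n) (p : V n × ℝ) : V n × ℝ := (x.w p.1, p.2 - ⟪p.1, x.b⟫)

/-- The affine action of `Ŵ` on `ℝⁿ`: `(w b')((z)) = w(z + b)`. -/
def affAct (x : ExtElem n) (z : V n) : V n := x.w (z + x.b)

/-- A Weyl group element `w` viewed in `Ŵ`. -/
def we (u : V n ≃ₗᵢ[ℝ] V n) : ExtElem n := ⟨u, 0⟩

/-- A translation `b'` viewed in `Ŵ`. -/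
def tr (b : V n) : ExtElem n := ⟨LinearIsometryEquiv.refl ℝ (V n), b⟩

end ExtElem

variable {n : ℕ}

/-- `ν_α = (α,α)/2`. -/
def nuv (α : V n) : ℝ := ⟪α, α⟫ / 2

/-- The coroot pairing `(b, α∨) = 2(b,α)/(α,α)`. -/
def pairv (b α : V n) : ℝ := 2 * ⟪b, α⟫ / ⟪α, α⟫

/-- The positive affine roots `R̃₊ = R₊ ∪ {[α, ν_α j] : α ∈ R, j > 0}`, realized as
pairs `(α, m)` with `m ∈ ν_α ℤ`. -/
def AffPlus (R Rplus : Set (V n)) : Set (V n × ℝ) :=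
  {p | p.1 ∈ R ∧ (∃ j : ℤ, p.2 = nuv p.1 * j) ∧ (0 < p.2 ∨ (p.2 = 0 ∧ p.1 ∈ Rplus))}

/-- `λ(ŵ) = R̃₊ ∩ ŵ⁻¹(R̃₋)`. -/
def lamSet (R Rplus : Set (V n)) (x : ExtElem n) : Set (V n × ℝ) :=
  AffPlus R Rplus ∩ {p | x.act p ∈ -AffPlus R Rplus}

/-- The length `l(ŵ) = |λ(ŵ)|`. -/
noncomputable def len (R Rplus : Set (V n)) (x : ExtElem n) : ℕ :=
  (lamSet R Rplus x).ncard

/-- Membership in the weight lattice `P`: `(α∨, b) ∈ ℤ` for all roots. -/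
def inLat (R : Set (V n)) (b : V n) : Prop :=
  ∀ α ∈ R, ∃ m : ℤ, ⟪α, b⟫ = nuv α * m

/-- Reflections `s_α`, `α ∈ R`. -/
def IsReflection (R : Set (V n)) (g : V n ≃ₗᵢ[ℝ] V n) : Prop :=
  ∃ α ∈ R, ∀ z, g z = z - pairv z α • α

/-- The Weyl group `W`, generated by the reflections `s_α`, `α ∈ R`. -/
def Weyl (R : Set (V n)) : Subgroup (V n ≃ₗᵢ[ℝ] V n) :=
  Subgroup.closure {g | IsReflection R g}

/-- `π_b = b·u_b⁻¹ = u_b⁻¹ ∘ (u_b b)' ∈ Ŵ` for `u ∈ W`. -/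
def piE (u : V n ≃ₗᵢ[ℝ] V n) (b : V n) : ExtElem n := ⟨u.symm, u b⟩

/-- `u = u_b`: the shortest element of `W` with `u(b) = b₋ ∈ P₋`, characterized by
`u(b)` antidominant together with `α ∈ λ(u) ⇒ (α, b) ≠ 0`. -/
def IsUb (R Rplus : Set (V n)) (b : V n) (u : V n ≃ₗᵢ[ℝ] V n) : Prop :=
  u ∈ Weyl R ∧ (∀ α ∈ Rplus, ⟪u b, α⟫ ≤ 0) ∧
    ∀ α ∈ Rplus, u α ∈ -Rplus → ⟪α, b⟫ ≠ 0

end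


noncomputable section
variable {n : ℕ}

lemma inner_self_ne (α : V n) (hα : α ≠ 0) : ⟪α, α⟫ ≠ 0 :=
  fun h => hα ((inner_self_eq_zero (𝕜 := ℝ)).mp h)

lemma pairv_add (x y α : V n) : pairv (x + y) α = pairv x α + pairv y α := by
  unfold pairv; rw [inner_add_left]; ring

lemma pairv_smul (t : ℝ) (x α : V n) : pairv (t • x) α = t * pairv x α := by
  unfold pairv; rw [real_inner_smul_left]; ring

lemma pairv_sub (x y α : V n) : pairv (x - y) α = pairv x α - pairv y α := by
  unfold pairv; rw [inner_sub_left]; ring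

lemma pairv_self (α : V n) (hα : α ≠ 0) : pairv α α = 2 := by
  unfold pairv; rw [div_eq_iff (inner_self_ne α hα)]

def rfl0 (α : V n) : V n →ₗ[ℝ] V n where
  toFun z := z - pairv z α • α
  map_add' x y := by
    show x + y - pairv (x + y) α • α = (x - pairv x α • α) + (y - pairv y α • α)
    rw [pairv_add]; module
  map_smul' t x := by
    show t • x - pairv (t • x) α • α = t • (x - pairv x α • α)
    rw [pairv_smul]; module

lemma rfl0_apply (α z : V n) : rfl0 α z = z - pairv z α • α := rfl

lemma rfl0_invol (α : V n) : Function.Involutive (rfl0 α) := by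
  intro z
  by_cases hα : α = 0
  · simp [rfl0_apply, hα]
  · rw [rfl0_apply, rfl0_apply, pairv_sub, pairv_smul, pairv_self α hα]
    module

lemma rfl0_inner (α x y : V n) : ⟪rfl0 α x, rfl0 α y⟫ = ⟪x, y⟫ := by
  by_cases hα : α = 0
  · simp [rfl0_apply, hα]
  · rw [rfl0_apply, rfl0_apply, inner_sub_left, inner_sub_right, inner_sub_right,
      real_inner_smul_left, real_inner_smul_right, real_inner_smul_left,
      real_inner_smul_right]
    unfold pairv
    rw [real_inner_comm α x, real_inner_comm α y]
    have hA := inner_self_ne α hα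
    generalize ⟪x, α⟫ = u at *
    generalize ⟪y, α⟫ = w at *
    generalize hAA : ⟪α, α⟫ = A at *
    field_simp
    ring

/-- The reflection `s_α` as a linear isometry equivalence. -/
def rf (α : V n) : V n ≃ₗᵢ[ℝ] V n :=
  { LinearEquiv.ofInvolutive (rfl0 α) (rfl0_invol α) with
    norm_map' := fun z => by
      have h : ⟪rfl0 α z, rfl0 α z⟫ = ⟪z, z⟫ := rfl0_inner α z z
      rw [real_inner_self_eq_norm_sq, real_inner_self_eq_norm_sq] at h
      have := congrArg Real.sqrt h
      rwa [Real.sqrt_sq (norm_nonneg _), Real.sqrt_sq (norm_nonneg _)] at this }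

lemma rf_apply (α z : V n) : rf α z = z - pairv z α • α := rfl

lemma rf_invol (α z : V n) : rf α (rf α z) = z := rfl0_invol α z

lemma rf_symm (α : V n) : (rf α).symm = rf α := by
  refine LinearIsometryEquiv.ext fun z => ?_
  exact ((rf α).symm_apply_eq).2 (rf_invol α z).symm

lemma pairv_iso (u : V n ≃ₗᵢ[ℝ] V n) (z γ : V n) : pairv (u z) (u γ) = pairv z γ := by
  unfold pairv; rw [u.inner_map_map, u.inner_map_map]

lemma rf_smul (t : ℝ) (ht : t ≠ 0) (δ z : V n) : rf (t • δ) z = rf δ z := by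
  by_cases hδ : δ = 0
  · simp [hδ]
  rw [rf_apply, rf_apply]
  have h1 : pairv z (t • δ) = pairv z δ / t := by
    unfold pairv
    rw [real_inner_smul_right, real_inner_smul_left, real_inner_smul_right]
    have hd := inner_self_ne δ hδ
    generalize ⟪z, δ⟫ = u at *
    generalize ⟪δ, δ⟫ = A at *
    field_simp
  have h2 : pairv z δ / t * t = pairv z δ := by field_simp
  rw [h1, smul_smul, h2]

lemma rf_conj (u : V n ≃ₗᵢ[ℝ] V n) (γ z : V n) : rf (u γ) (u z) = u (rf γ z) := by
  rw [rf_apply, rf_apply, pairv_iso, map_sub, map_smul]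

/-- product of reflections along a list -/
def prodRefl (L : List (V n)) : V n ≃ₗᵢ[ℝ] V n :=
  L.foldr (fun δ g => g.trans (rf δ)) (LinearIsometryEquiv.refl ℝ (V n))

@[simp] lemma prodRefl_nil (z : V n) : prodRefl ([] : List (V n)) z = z := rfl

@[simp] lemma prodRefl_cons (δ : V n) (L : List (V n)) (z : V n) :
    prodRefl (δ :: L) z = rf δ (prodRefl L z) := rfl

lemma prodRefl_append (A B : List (V n)) (z : V n) :
    prodRefl (A ++ B) z = prodRefl A (prodRefl B z) := by
  induction A with
  | nil => rfl
  | cons a A ih => simp [ih]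

lemma prodRefl_reverse (L : List (V n)) (z : V n) :
    prodRefl L (prodRefl L.reverse z) = z := by
  induction L generalizing z with
  | nil => rfl
  | cons a L ih =>
      have : (a :: L).reverse = L.reverse ++ [a] := by simp
      rw [this, prodRefl_append, prodRefl_cons]
      rw [show prodRefl [a] z = rf a z from rfl, ih, rf_invol]

/-! ## Root system combinatorics -/

def Dlt (Rplus : Set (V n)) : Set (V n) :=
  {β | β ∈ Rplus ∧ ¬ ∃ γ₁ ∈ Rplus, ∃ γ₂ ∈ Rplus, β = γ₁ + γ₂}

lemma mem_Dlt {Rplus : Set (V n)} {β : V n} :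
    β ∈ Dlt Rplus ↔ β ∈ Rplus ∧ ¬ ∃ γ₁ ∈ Rplus, ∃ γ₂ ∈ Rplus, β = γ₁ + γ₂ := Iff.rfl

section RS

variable {R Rplus : Set (V n)} {v : V n}

lemma rplus_sub (hR : R = Rplus ∪ (-Rplus)) : Rplus ⊆ R := by
  rw [hR]; exact Set.subset_union_left

lemma rminus_sub (hR : R = Rplus ∪ (-Rplus)) : -Rplus ⊆ R := by
  rw [hR]; exact Set.subset_union_right

lemma mem_negS {S : Set (V n)} {α : V n} : α ∈ -S ↔ -α ∈ S := Set.mem_neg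

lemma vsign_neg (hv : ∀ α ∈ Rplus, 0 < ⟪v, α⟫) {α : V n} (hα : α ∈ -Rplus) :
    ⟪v, α⟫ < 0 := by
  have := hv (-α) (mem_negS.1 hα)
  rw [inner_neg_right] at this; linarith

lemma sign_char (hR : R = Rplus ∪ (-Rplus)) (hv : ∀ α ∈ Rplus, 0 < ⟪v, α⟫)
    {α : V n} (hα : α ∈ R) : (α ∈ Rplus ↔ 0 < ⟪v, α⟫) ∧ (α ∈ -Rplus ↔ ⟪v, α⟫ < 0) := by
  rw [hR] at hα
  rcases hα with h | h
  · exact ⟨⟨fun _ => hv _ h, fun _ => h⟩,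
      ⟨fun h' => absurd (hv _ h) (by have := vsign_neg hv h'; linarith),
       fun h' => absurd (hv _ h) (by linarith)⟩⟩
  · have hlt := vsign_neg hv h
    exact ⟨⟨fun h' => absurd (hv _ h') (by linarith), fun h' => absurd h' (by linarith)⟩,
      ⟨fun _ => hlt, fun _ => h⟩⟩

lemma r_ne_zero (h0 : (0 : V n) ∉ R) {α : V n} (hα : α ∈ R) : α ≠ 0 :=
  fun h => h0 (h ▸ hα)

lemma rf_mem_R (hrefl : ∀ α ∈ R, ∀ β ∈ R, β - pairv β α • α ∈ R)
    {α β : V n} (hα : α ∈ R) (hβ : β ∈ R) : rf α β ∈ R := by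
  rw [rf_apply]; exact hrefl α hα β hβ

lemma neg_mem_R (h0 : (0 : V n) ∉ R) (hrefl : ∀ α ∈ R, ∀ β ∈ R, β - pairv β α • α ∈ R)
    {β : V n} (hβ : β ∈ R) : -β ∈ R := by
  have h := hrefl β hβ β hβ
  rw [pairv_self β (r_ne_zero h0 hβ)] at h
  have : β - (2:ℝ) • β = -β := by module
  rwa [this] at h

lemma prodRefl_mem_R (hrefl : ∀ α ∈ R, ∀ β ∈ R, β - pairv β α • α ∈ R)
    {L : List (V n)} (hL : ∀ δ ∈ L, δ ∈ R) {β : V n} (hβ : β ∈ R) :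
    prodRefl L β ∈ R := by
  induction L with
  | nil => simpa using hβ
  | cons a L ih =>
      rw [prodRefl_cons]
      exact rf_mem_R hrefl (hL a (by simp)) (ih (fun δ hδ => hL δ (by simp [hδ])))

/-- The finite set of simple roots. -/
def DltF (hfin : R.Finite) (hR : R = Rplus ∪ (-Rplus)) : Finset (V n) :=
  (hfin.subset (fun β hβ => rplus_sub hR (mem_Dlt.1 hβ).1)).toFinset

lemma mem_DltF {hfin : R.Finite} {hR : R = Rplus ∪ (-Rplus)} {γ : V n} :
    γ ∈ DltF (Rplus := Rplus) hfin hR ↔ γ ∈ Dlt Rplus := Set.Finite.mem_toFinset _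

/-- nonnegative combination of simple roots -/
def isComb (hfin : R.Finite) (hR : R = Rplus ∪ (-Rplus)) (β : V n) : Prop :=
  ∃ c : V n → ℝ, (∀ γ ∈ DltF (Rplus := Rplus) hfin hR, 0 ≤ c γ) ∧
    β = ∑ γ ∈ DltF (Rplus := Rplus) hfin hR, c γ • γ

lemma comb_exists (hfin : R.Finite) (hR : R = Rplus ∪ (-Rplus))
    (hv : ∀ α ∈ Rplus, 0 < ⟪v, α⟫) :
    ∀ β ∈ Rplus, isComb (Rplus := Rplus) hfin hR β := by
  classical
  -- strong induction on the number of positive roots with smaller ⟪v,·⟫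
  suffices H : ∀ k : ℕ, ∀ β ∈ Rplus,
      (hfin.toFinset.filter (fun γ => γ ∈ Rplus ∧ ⟪v, γ⟫ < ⟪v, β⟫)).card ≤ k →
      isComb (Rplus := Rplus) hfin hR β by
    intro β hβ
    exact H _ β hβ le_rfl
  intro k
  induction k with
  | zero =>
      intro β hβ hcard
      by_cases hd : β ∈ Dlt Rplus
      · exact ⟨fun γ => if γ = β then 1 else 0, fun γ _ => by positivity, by
          rw [Finset.sum_eq_single β (fun γ _ hne => by simp [hne])
            (fun hβ' => absurd (mem_DltF.2 hd) hβ')]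
          simp⟩
      · exfalso
        obtain ⟨γ₁, hγ₁, γ₂, hγ₂, hsum⟩ := not_not.1 (fun h => hd (mem_Dlt.2 ⟨hβ, h⟩))
        have h1 : ⟪v, γ₁⟫ < ⟪v, β⟫ := by
          rw [hsum, inner_add_right]; have := hv γ₂ hγ₂; linarith
        have : γ₁ ∈ hfin.toFinset.filter (fun γ => γ ∈ Rplus ∧ ⟪v, γ⟫ < ⟪v, β⟫) := by
          rw [Finset.mem_filter, Set.Finite.mem_toFinset]
          exact ⟨rplus_sub hR hγ₁, hγ₁, h1⟩
        have := Finset.card_pos.2 ⟨γ₁, this⟩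
        omega
  | succ k ih =>
      intro β hβ hcard
      by_cases hd : β ∈ Dlt Rplus
      · exact ⟨fun γ => if γ = β then 1 else 0, fun γ _ => by positivity, by
          rw [Finset.sum_eq_single β (fun γ _ hne => by simp [hne])
            (fun hβ' => absurd (mem_DltF.2 hd) hβ')]
          simp⟩
      · obtain ⟨γ₁, hγ₁, γ₂, hγ₂, hsum⟩ := not_not.1 (fun h => hd (mem_Dlt.2 ⟨hβ, h⟩))
        have key : ∀ γ' ∈ Rplus, ⟪v, γ'⟫ < ⟪v, β⟫ →
            (hfin.toFinset.filter (fun γ => γ ∈ Rplus ∧ ⟪v, γ⟫ < ⟪v, γ'⟫)).card ≤ k := by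
          intro γ' hγ' hlt
          have hsub : hfin.toFinset.filter (fun γ => γ ∈ Rplus ∧ ⟪v, γ⟫ < ⟪v, γ'⟫) ⊆
              (hfin.toFinset.filter (fun γ => γ ∈ Rplus ∧ ⟪v, γ⟫ < ⟪v, β⟫)).erase γ' := by
            intro γ hγ
            rw [Finset.mem_filter] at hγ
            rw [Finset.mem_erase, Finset.mem_filter]
            refine ⟨fun h => absurd hγ.2.2 (by rw [h]; exact lt_irrefl _), hγ.1, hγ.2.1, by linarith [hγ.2.2]⟩
          have hγ'mem : γ' ∈ hfin.toFinset.filter (fun γ => γ ∈ Rplus ∧ ⟪v, γ⟫ < ⟪v, β⟫) := by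
            rw [Finset.mem_filter, Set.Finite.mem_toFinset]
            exact ⟨rplus_sub hR hγ', hγ', hlt⟩
          calc _ ≤ ((hfin.toFinset.filter (fun γ => γ ∈ Rplus ∧ ⟪v, γ⟫ < ⟪v, β⟫)).erase γ').card :=
                Finset.card_le_card hsub
            _ = (hfin.toFinset.filter (fun γ => γ ∈ Rplus ∧ ⟪v, γ⟫ < ⟪v, β⟫)).card - 1 :=
                Finset.card_erase_of_mem hγ'mem
            _ ≤ k := by omega
        have h1 : ⟪v, γ₁⟫ < ⟪v, β⟫ := by
          rw [hsum, inner_add_right]; have := hv γ₂ hγ₂; linarith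
        have h2 : ⟪v, γ₂⟫ < ⟪v, β⟫ := by
          rw [hsum, inner_add_right]; have := hv γ₁ hγ₁; linarith
        obtain ⟨c₁, hc₁, he₁⟩ := ih γ₁ hγ₁ (key γ₁ hγ₁ h1)
        obtain ⟨c₂, hc₂, he₂⟩ := ih γ₂ hγ₂ (key γ₂ hγ₂ h2)
        refine ⟨fun γ => c₁ γ + c₂ γ, fun γ hγ => add_nonneg (hc₁ γ hγ) (hc₂ γ hγ), ?_⟩
        rw [hsum, he₁, he₂, ← Finset.sum_add_distrib]
        exact Finset.sum_congr rfl fun γ _ => (add_smul _ _ _).symm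

lemma inner_self_pos' {α : V n} (hα : α ≠ 0) : 0 < ⟪α, α⟫ :=
  lt_of_le_of_ne real_inner_self_nonneg (Ne.symm (inner_self_ne α hα))

lemma dlt_obtuse (hR : R = Rplus ∪ (-Rplus)) (h0 : (0 : V n) ∉ R)
    (hrefl : ∀ α ∈ R, ∀ β ∈ R, β - pairv β α • α ∈ R)
    (hcart : ∀ α ∈ R, ∀ β ∈ R, ∃ m : ℤ, pairv β α = m)
    {α β : V n} (hα : α ∈ Dlt Rplus) (hβ : β ∈ Dlt Rplus) (hne : α ≠ β) : ⟪α, β⟫ ≤ 0 := by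
  by_contra hip
  push_neg at hip
  have hαR : α ∈ R := rplus_sub hR (mem_Dlt.1 hα).1
  have hβR : β ∈ R := rplus_sub hR (mem_Dlt.1 hβ).1
  have hα0 : α ≠ 0 := r_ne_zero h0 hαR
  have hβ0 : β ≠ 0 := r_ne_zero h0 hβR
  have hαα := inner_self_pos' hα0
  have hββ := inner_self_pos' hβ0
  obtain ⟨m₁, hm₁⟩ := hcart α hαR β hβR
  obtain ⟨m₂, hm₂⟩ := hcart β hβR α hαR
  have hβα : ⟪β, α⟫ = ⟪α, β⟫ := real_inner_comm α β
  have hp₁ : (0:ℝ) < m₁ := by rw [← hm₁]; unfold pairv; rw [hβα]; positivity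
  have hp₂ : (0:ℝ) < m₂ := by rw [← hm₂]; unfold pairv; positivity
  have h1₁ : 1 ≤ m₁ := by exact_mod_cast hp₁
  have h1₂ : 1 ≤ m₂ := by exact_mod_cast hp₂
  have hCS : ⟪β, α⟫ * ⟪β, α⟫ ≤ ⟪β, β⟫ * ⟪α, α⟫ := real_inner_mul_inner_self_le β α
  have hprod : (m₁ : ℝ) * m₂ ≤ 4 := by
    rw [← hm₁, ← hm₂]
    unfold pairv
    rw [hβα]
    rw [div_mul_div_comm, div_le_iff₀ (by positivity)]
    nlinarith [hCS, hβα, hip]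
  have hprodZ : m₁ * m₂ ≤ 4 := by exact_mod_cast hprod
  have hm₁4 : m₁ ≤ 4 := by nlinarith
  have hm₂4 : m₂ ≤ 4 := by nlinarith
  have hcases : m₁ = 1 ∨ m₂ = 1 ∨ (m₁ = 2 ∧ m₂ = 2) := by
    interval_cases m₁ <;> interval_cases m₂ <;> omega
  have decompβ : β - α ∈ R → False := by
    intro hs
    rw [hR] at hs
    rcases hs with h | h
    · exact (mem_Dlt.1 hβ).2 ⟨β - α, h, α, (mem_Dlt.1 hα).1, by abel⟩
    · have : α - β ∈ Rplus := by rw [← neg_sub]; exact mem_negS.1 h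
      exact (mem_Dlt.1 hα).2 ⟨α - β, this, β, (mem_Dlt.1 hβ).1, by abel⟩
  rcases hcases with h | h | ⟨h2, h2'⟩
  · have hs : β - α ∈ R := by
      have := hrefl α hαR β hβR
      rw [hm₁, h] at this
      simpa using this
    exact decompβ hs
  · have hs : α - β ∈ R := by
      have := hrefl β hβR α hαR
      rw [hm₂, h] at this
      simpa using this
    have : β - α ∈ R := by
      have := neg_mem_R h0 hrefl hs
      rwa [neg_sub] at this
    exact decompβ this
  · have e₁ : ⟪β, α⟫ = ⟪α, α⟫ := by
      have hp : pairv β α = 2 := by rw [hm₁, h2]; norm_num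
      unfold pairv at hp
      rw [div_eq_iff (ne_of_gt hαα)] at hp
      linarith
    have e₂ : ⟪α, β⟫ = ⟪β, β⟫ := by
      have hp : pairv α β = 2 := by rw [hm₂, h2']; norm_num
      unfold pairv at hp
      rw [div_eq_iff (ne_of_gt hββ)] at hp
      linarith
    have hzero : ⟪α - β, α - β⟫ = 0 := by
      rw [inner_sub_sub_self]
      linarith
    have : α - β = 0 := (inner_self_eq_zero (𝕜 := ℝ)).1 hzero
    exact hne (sub_eq_zero.1 this)

lemma dlt_indep_aux (hfin : R.Finite) (hR : R = Rplus ∪ (-Rplus)) (h0 : (0 : V n) ∉ R)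
    (hrefl : ∀ α ∈ R, ∀ β ∈ R, β - pairv β α • α ∈ R)
    (hcart : ∀ α ∈ R, ∀ β ∈ R, ∃ m : ℤ, pairv β α = m)
    (hv : ∀ α ∈ Rplus, 0 < ⟪v, α⟫)
    (c : V n → ℝ) (hsum : ∑ γ ∈ DltF (Rplus := Rplus) hfin hR, c γ • γ = 0) :
    ∀ γ ∈ DltF (Rplus := Rplus) hfin hR, c γ ≤ 0 := by
  classical
  set D := DltF (Rplus := Rplus) hfin hR with hD
  set P := D.filter (fun γ => 0 < c γ) with hP
  set M := D.filter (fun γ => ¬ 0 < c γ) with hM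
  have hmemD : ∀ γ ∈ D, γ ∈ Dlt Rplus := fun γ hγ => mem_DltF.1 hγ
  set u := ∑ γ ∈ P, c γ • γ with hu
  have hsplit : ∑ γ ∈ P, c γ • γ + ∑ γ ∈ M, c γ • γ = 0 := by
    rw [hP, hM, Finset.sum_filter_add_sum_filter_not]; exact hsum
  have hu2 : u = ∑ γ ∈ M, (-(c γ)) • γ := by
    rw [hu, eq_neg_of_add_eq_zero_left hsplit]
    simp only [neg_smul]
    exact (Finset.sum_neg_distrib _).symm
  have key : ⟪∑ γ ∈ P, c γ • γ, ∑ δ ∈ M, (-(c δ)) • δ⟫ ≤ 0 := by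
    rw [sum_inner]
    refine Finset.sum_nonpos fun γ hγ => ?_
    rw [real_inner_smul_left, inner_sum]
    have hγP := Finset.mem_filter.1 hγ
    refine mul_nonpos_of_nonneg_of_nonpos (le_of_lt hγP.2) (Finset.sum_nonpos fun δ hδ => ?_)
    rw [real_inner_smul_right]
    have hδM := Finset.mem_filter.1 hδ
    have hne : γ ≠ δ := fun h => hδM.2 (h ▸ hγP.2)
    exact mul_nonpos_of_nonneg_of_nonpos (by linarith [not_lt.1 hδM.2])
      (dlt_obtuse hR h0 hrefl hcart (hmemD γ hγP.1) (hmemD δ hδM.1) hne)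
  have huu : ⟪u, u⟫ ≤ 0 := by
    rw [show ⟪u, u⟫ = ⟪∑ γ ∈ P, c γ • γ, ∑ δ ∈ M, (-(c δ)) • δ⟫ from by rw [← hu, ← hu2]]
    exact key
  have huzero : u = 0 :=
    (inner_self_eq_zero (𝕜 := ℝ)).1 (le_antisymm huu real_inner_self_nonneg)
  have hvsum : ∑ γ ∈ P, c γ * ⟪v, γ⟫ = 0 := by
    calc ∑ γ ∈ P, c γ * ⟪v, γ⟫ = ∑ γ ∈ P, ⟪v, c γ • γ⟫ :=
          Finset.sum_congr rfl fun γ _ => (real_inner_smul_right v γ (c γ)).symm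
      _ = ⟪v, u⟫ := (inner_sum P (fun γ => c γ • γ) v).symm
      _ = 0 := by rw [huzero, inner_zero_right]
  intro γ hγ
  by_contra hpos
  push_neg at hpos
  have hγP : γ ∈ P := Finset.mem_filter.2 ⟨hγ, hpos⟩
  have hnonneg : ∀ δ ∈ P, 0 ≤ c δ * ⟪v, δ⟫ := fun δ hδ => by
    have hδP := Finset.mem_filter.1 hδ
    exact le_of_lt (mul_pos hδP.2 (hv δ (mem_Dlt.1 (hmemD δ hδP.1)).1))
  have := (Finset.sum_eq_zero_iff_of_nonneg hnonneg).1 hvsum γ hγP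
  have hγDlt := mem_Dlt.1 (hmemD γ (Finset.mem_filter.1 hγP).1)
  nlinarith [hv γ hγDlt.1]

lemma dlt_indep (hfin : R.Finite) (hR : R = Rplus ∪ (-Rplus)) (h0 : (0 : V n) ∉ R)
    (hrefl : ∀ α ∈ R, ∀ β ∈ R, β - pairv β α • α ∈ R)
    (hcart : ∀ α ∈ R, ∀ β ∈ R, ∃ m : ℤ, pairv β α = m)
    (hv : ∀ α ∈ Rplus, 0 < ⟪v, α⟫)
    (c : V n → ℝ) (hsum : ∑ γ ∈ DltF (Rplus := Rplus) hfin hR, c γ • γ = 0) :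
    ∀ γ ∈ DltF (Rplus := Rplus) hfin hR, c γ = 0 := by
  intro γ hγ
  have h1 := dlt_indep_aux hfin hR h0 hrefl hcart hv c hsum γ hγ
  have hsum2 : ∑ γ ∈ DltF (Rplus := Rplus) hfin hR, (-(c γ)) • γ = 0 := by
    simp only [neg_smul]
    rw [Finset.sum_neg_distrib, hsum, neg_zero]
  have h2 := dlt_indep_aux hfin hR h0 hrefl hcart hv (fun γ => -(c γ)) hsum2 γ hγ
  simp only [neg_nonpos] at h2
  linarith

lemma rf_neg_multiple (hfin : R.Finite) (hR : R = Rplus ∪ (-Rplus)) (h0 : (0 : V n) ∉ R)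
    (hrefl : ∀ α ∈ R, ∀ β ∈ R, β - pairv β α • α ∈ R)
    (hcart : ∀ α ∈ R, ∀ β ∈ R, ∃ m : ℤ, pairv β α = m)
    (hv : ∀ α ∈ Rplus, 0 < ⟪v, α⟫)
    {δ β : V n} (hδ : δ ∈ Dlt Rplus) (hβ : β ∈ Rplus) (hneg : rf δ β ∈ -Rplus) :
    ∃ t : ℝ, t ≠ 0 ∧ β = t • δ := by
  classical
  set D := DltF (Rplus := Rplus) hfin hR with hD
  have hδD : δ ∈ D := mem_DltF.2 hδ
  obtain ⟨c, hc0, hce⟩ := comb_exists hfin hR hv β hβ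
  have hneg' : pairv β δ • δ - β ∈ Rplus := by
    have := mem_negS.1 hneg
    rw [rf_apply] at this
    rwa [neg_sub] at this
  obtain ⟨d, hd0, hde⟩ := comb_exists hfin hR hv _ hneg'
  set p := pairv β δ with hp
  have hitesum : ∑ γ ∈ D, (if γ = δ then p else 0) • γ = p • δ := by
    rw [Finset.sum_eq_single δ (fun γ _ hne => by rw [if_neg hne, zero_smul])
      (fun h => absurd hδD h)]
    rw [if_pos rfl]
  have hzero : ∑ γ ∈ D, (c γ + d γ - (if γ = δ then p else 0)) • γ = 0 := by
    have : ∀ γ ∈ D, (c γ + d γ - (if γ = δ then p else 0)) • γ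
        = c γ • γ + d γ • γ - (if γ = δ then p else 0) • γ := fun γ _ => by
      rw [sub_smul, add_smul]
    rw [Finset.sum_congr rfl this, Finset.sum_sub_distrib, Finset.sum_add_distrib,
      hitesum, ← hce, ← hde]
    abel
  have hall := dlt_indep hfin hR h0 hrefl hcart hv _ hzero
  have hcγ : ∀ γ ∈ D, γ ≠ δ → c γ = 0 := by
    intro γ hγ hne
    have := hall γ hγ
    rw [if_neg hne] at this
    have h1 := hc0 γ hγ
    have h2 := hd0 γ hγ
    simp only [sub_zero] at this
    linarith
  have hβeq : β = c δ • δ := by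
    rw [hce]
    exact Finset.sum_eq_single δ (fun γ hγ hne => by rw [hcγ γ hγ hne, zero_smul])
      (fun h => absurd hδD h)
  refine ⟨c δ, fun h => ?_, hβeq⟩
  rw [h, zero_smul] at hβeq
  exact h0 (hβeq ▸ rplus_sub hR hβ)

lemma dlt_pos_inner (hfin : R.Finite) (hR : R = Rplus ∪ (-Rplus)) (h0 : (0 : V n) ∉ R)
    (hv : ∀ α ∈ Rplus, 0 < ⟪v, α⟫) {α : V n} (hα : α ∈ Rplus) :
    ∃ δ ∈ Dlt Rplus, 0 < ⟪α, δ⟫ := by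
  by_contra hno
  push_neg at hno
  obtain ⟨c, hc0, hce⟩ := comb_exists hfin hR hv α hα
  have : ⟪α, α⟫ ≤ 0 := by
    nth_rewrite 2 [hce]
    rw [inner_sum]
    refine Finset.sum_nonpos fun γ hγ => ?_
    rw [real_inner_smul_right]
    exact mul_nonpos_of_nonneg_of_nonpos (hc0 γ hγ) (hno γ (mem_DltF.1 hγ))
  exact r_ne_zero h0 (rplus_sub hR hα)
    ((inner_self_eq_zero (𝕜 := ℝ)).1 (le_antisymm this real_inner_self_nonneg))

lemma refl_word (hfin : R.Finite) (hR : R = Rplus ∪ (-Rplus)) (h0 : (0 : V n) ∉ R)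
    (hrefl : ∀ α ∈ R, ∀ β ∈ R, β - pairv β α • α ∈ R)
    (hcart : ∀ α ∈ R, ∀ β ∈ R, ∃ m : ℤ, pairv β α = m)
    (hv : ∀ α ∈ Rplus, 0 < ⟪v, α⟫) :
    ∀ α ∈ Rplus, ∃ L : List (V n), (∀ δ ∈ L, δ ∈ Dlt Rplus) ∧
      ∀ z, rf α z = prodRefl L z := by
  classical
  suffices H : ∀ k : ℕ, ∀ α ∈ Rplus,
      (hfin.toFinset.filter (fun γ => γ ∈ Rplus ∧ ⟪v, γ⟫ < ⟪v, α⟫)).card ≤ k →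
      ∃ L : List (V n), (∀ δ ∈ L, δ ∈ Dlt Rplus) ∧ ∀ z, rf α z = prodRefl L z by
    intro α hα; exact H _ α hα le_rfl
  intro k
  induction k with
  | zero =>
      intro α hα hcard
      obtain ⟨δ, hδ, hip⟩ := dlt_pos_inner hfin hR h0 hv hα
      have hδR : δ ∈ R := rplus_sub hR (mem_Dlt.1 hδ).1
      have hαR : α ∈ R := rplus_sub hR hα
      have hp : 0 < pairv α δ := by
        unfold pairv
        have := inner_self_pos' (r_ne_zero h0 hδR)
        positivity
      have hβR : rf δ α ∈ R := rf_mem_R hrefl hδR hαR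
      have hvβ : ⟪v, rf δ α⟫ < ⟪v, α⟫ := by
        rw [rf_apply, inner_sub_right, real_inner_smul_right]
        nlinarith [hv δ (mem_Dlt.1 hδ).1]
      have hβneg : rf δ α ∈ -Rplus := by
        rw [hR] at hβR
        rcases hβR with h | h
        · exfalso
          have : rf δ α ∈ hfin.toFinset.filter (fun γ => γ ∈ Rplus ∧ ⟪v, γ⟫ < ⟪v, α⟫) := by
            rw [Finset.mem_filter, Set.Finite.mem_toFinset]
            exact ⟨rplus_sub hR h, h, hvβ⟩
          have := Finset.card_pos.2 ⟨_, this⟩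
          omega
        · exact h
      obtain ⟨t, ht, hmul⟩ := rf_neg_multiple hfin hR h0 hrefl hcart hv hδ hα hβneg
      exact ⟨[δ], fun δ' h => by rw [List.mem_singleton] at h; exact h ▸ hδ, fun z => by
        rw [hmul, rf_smul t ht, prodRefl_cons, prodRefl_nil]⟩
  | succ k ih =>
      intro α hα hcard
      obtain ⟨δ, hδ, hip⟩ := dlt_pos_inner hfin hR h0 hv hα
      have hδR : δ ∈ R := rplus_sub hR (mem_Dlt.1 hδ).1
      have hαR : α ∈ R := rplus_sub hR hα
      have hp : 0 < pairv α δ := by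
        unfold pairv
        have := inner_self_pos' (r_ne_zero h0 hδR)
        positivity
      have hβR : rf δ α ∈ R := rf_mem_R hrefl hδR hαR
      have hvβ : ⟪v, rf δ α⟫ < ⟪v, α⟫ := by
        rw [rf_apply, inner_sub_right, real_inner_smul_right]
        nlinarith [hv δ (mem_Dlt.1 hδ).1]
      rw [hR] at hβR
      rcases hβR with hβp | hβn
      · -- positive case : conjugate
        have hcard' : (hfin.toFinset.filter
            (fun γ => γ ∈ Rplus ∧ ⟪v, γ⟫ < ⟪v, rf δ α⟫)).card ≤ k := by
          have hsub : hfin.toFinset.filter (fun γ => γ ∈ Rplus ∧ ⟪v, γ⟫ < ⟪v, rf δ α⟫) ⊆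
              (hfin.toFinset.filter (fun γ => γ ∈ Rplus ∧ ⟪v, γ⟫ < ⟪v, α⟫)).erase (rf δ α) := by
            intro γ hγ
            rw [Finset.mem_filter] at hγ
            rw [Finset.mem_erase, Finset.mem_filter]
            exact ⟨fun h => absurd hγ.2.2 (by rw [h]; exact lt_irrefl _), hγ.1, hγ.2.1,
              by linarith [hγ.2.2]⟩
          have hmem : rf δ α ∈ hfin.toFinset.filter
              (fun γ => γ ∈ Rplus ∧ ⟪v, γ⟫ < ⟪v, α⟫) := by
            rw [Finset.mem_filter, Set.Finite.mem_toFinset]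
            exact ⟨rplus_sub hR hβp, hβp, hvβ⟩
          calc _ ≤ _ := Finset.card_le_card hsub
            _ = _ := Finset.card_erase_of_mem hmem
            _ ≤ k := by omega
        obtain ⟨Lβ, hLβ, hLβe⟩ := ih (rf δ α) hβp hcard'
        refine ⟨δ :: (Lβ ++ [δ]), ?_, fun z => ?_⟩
        · intro δ' h
          rcases List.mem_cons.1 h with rfl | h
          · exact hδ
          rcases List.mem_append.1 h with h | h
          · exact hLβ δ' h
          · rw [List.mem_singleton] at h; exact h ▸ hδ
        · have h1 := rf_conj (rf δ) (rf δ α) (rf δ z)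
          rw [rf_invol δ α, rf_invol δ z] at h1
          rw [h1, hLβe (rf δ z), prodRefl_cons, prodRefl_append, prodRefl_cons, prodRefl_nil]
      · obtain ⟨t, ht, hmul⟩ := rf_neg_multiple hfin hR h0 hrefl hcart hv hδ hα hβn
        exact ⟨[δ], fun δ' h => by rw [List.mem_singleton] at h; exact h ▸ hδ, fun z => by
          rw [hmul, rf_smul t ht, prodRefl_cons, prodRefl_nil]⟩

end RS

section RS2

variable {R Rplus : Set (V n)} {v : V n}

lemma weyl_word (hfin : R.Finite) (hR : R = Rplus ∪ (-Rplus)) (h0 : (0 : V n) ∉ R)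
    (hrefl : ∀ α ∈ R, ∀ β ∈ R, β - pairv β α • α ∈ R)
    (hcart : ∀ α ∈ R, ∀ β ∈ R, ∃ m : ℤ, pairv β α = m)
    (hv : ∀ α ∈ Rplus, 0 < ⟪v, α⟫)
    {w : V n ≃ₗᵢ[ℝ] V n} (hw : w ∈ Weyl R) :
    ∃ L : List (V n), (∀ δ ∈ L, δ ∈ Dlt Rplus) ∧ ∀ z, w z = prodRefl L z := by
  induction hw using Subgroup.closure_induction with
  | mem g hg =>
      obtain ⟨α, hαR, hg⟩ := hg
      have hα' : α ∈ Rplus ∪ (-Rplus) := hR ▸ hαR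
      have hrfeq : ∀ z, g z = rf α z := fun z => by rw [hg z, rf_apply]
      rcases hα' with h | h
      · obtain ⟨L, hL, hLe⟩ := refl_word hfin hR h0 hrefl hcart hv α h
        exact ⟨L, hL, fun z => by rw [hrfeq z, hLe z]⟩
      · obtain ⟨L, hL, hLe⟩ := refl_word hfin hR h0 hrefl hcart hv (-α) (mem_negS.1 h)
        refine ⟨L, hL, fun z => ?_⟩
        have hsm : rf ((-1 : ℝ) • (-α)) z = rf (-α) z := rf_smul (-1) (by norm_num) (-α) z
        rw [hrfeq z, show α = (-1 : ℝ) • (-α) by module, hsm, hLe z]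
  | one => exact ⟨[], by simp, fun z => rfl⟩
  | mul x y hx hy ihx ihy =>
      obtain ⟨Lx, hLx, hLxe⟩ := ihx
      obtain ⟨Ly, hLy, hLye⟩ := ihy
      refine ⟨Lx ++ Ly, fun δ h => (List.mem_append.1 h).elim (hLx δ) (hLy δ), fun z => ?_⟩
      rw [prodRefl_append, ← hLye z, ← hLxe (y z)]
      rfl
  | inv x hx ihx =>
      obtain ⟨L, hL, hLe⟩ := ihx
      refine ⟨L.reverse, fun δ h => hL δ (List.mem_reverse.1 h), fun z => ?_⟩
      have : x (prodRefl L.reverse z) = z := by rw [hLe, prodRefl_reverse]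
      calc x⁻¹ z = x.symm z := rfl
        _ = prodRefl L.reverse z := (x.symm_apply_eq).2 this.symm

lemma keyD (hfin : R.Finite) (hR : R = Rplus ∪ (-Rplus)) (hdisj : Disjoint Rplus (-Rplus))
    (h0 : (0 : V n) ∉ R)
    (hrefl : ∀ α ∈ R, ∀ β ∈ R, β - pairv β α • α ∈ R)
    (hcart : ∀ α ∈ R, ∀ β ∈ R, ∃ m : ℤ, pairv β α = m)
    (hv : ∀ α ∈ Rplus, 0 < ⟪v, α⟫) :
    ∀ L : List (V n), (∀ δ' ∈ L, δ' ∈ Dlt Rplus) → ∀ δ ∈ Dlt Rplus,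
      prodRefl L δ ∈ -Rplus →
      ∃ L' : List (V n), (∀ δ' ∈ L', δ' ∈ Dlt Rplus) ∧ L'.length + 1 ≤ L.length ∧
        ∀ z, prodRefl L (rf δ z) = prodRefl L' z := by
  intro L
  induction L with
  | nil =>
      intro _ δ hδ hneg
      rw [prodRefl_nil] at hneg
      exact absurd hneg (Set.disjoint_left.1 hdisj (mem_Dlt.1 hδ).1)
  | cons a L ih =>
      intro hL δ hδ hneg
      have ha : a ∈ Dlt Rplus := hL a List.mem_cons_self
      have hLd : ∀ δ' ∈ L, δ' ∈ Dlt Rplus := fun δ' h => hL δ' (List.mem_cons_of_mem _ h)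
      have hyR : prodRefl L δ ∈ R := prodRefl_mem_R hrefl
        (fun δ' h => rplus_sub hR (mem_Dlt.1 (hLd δ' h)).1) (rplus_sub hR (mem_Dlt.1 hδ).1)
      rw [hR] at hyR
      rcases hyR with hy | hy
      · -- prodRefl L δ positive : multiple case
        have hneg' : rf a (prodRefl L δ) ∈ -Rplus := by rw [← prodRefl_cons]; exact hneg
        obtain ⟨t, ht, hmul⟩ := rf_neg_multiple hfin hR h0 hrefl hcart hv ha hy hneg'
        refine ⟨L, hLd, by simp, fun z => ?_⟩
        rw [prodRefl_cons]
        have h1 : prodRefl L (rf δ z) = rf (prodRefl L δ) (prodRefl L z) := by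
          rw [rf_conj (prodRefl L) δ z]
        rw [h1, hmul, rf_smul t ht, rf_invol]
      · obtain ⟨L'', hL'', hlen, heq⟩ := ih hLd δ hδ hy
        refine ⟨a :: L'', fun δ' h => (List.mem_cons.1 h).elim (fun h' => h' ▸ ha) (hL'' δ'),
          by simpa using hlen, fun z => ?_⟩
        rw [prodRefl_cons, heq z, prodRefl_cons]

lemma word_uniq (hfin : R.Finite) (hR : R = Rplus ∪ (-Rplus)) (hdisj : Disjoint Rplus (-Rplus))
    (h0 : (0 : V n) ∉ R)
    (hrefl : ∀ α ∈ R, ∀ β ∈ R, β - pairv β α • α ∈ R)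
    (hcart : ∀ α ∈ R, ∀ β ∈ R, ∃ m : ℤ, pairv β α = m)
    (hv : ∀ α ∈ Rplus, 0 < ⟪v, α⟫) :
    ∀ k : ℕ, ∀ L : List (V n), L.length ≤ k → (∀ δ ∈ L, δ ∈ Dlt Rplus) →
      ∀ lam mu : V n, (∀ α ∈ Rplus, ⟪lam, α⟫ ≤ 0) → (∀ α ∈ Rplus, ⟪mu, α⟫ ≤ 0) →
      prodRefl L lam = mu → lam = mu := by
  intro k
  induction k with
  | zero =>
      intro L hlen _ lam mu _ _ heq
      rw [List.length_eq_zero_iff.1 (Nat.le_zero.1 hlen)] at heq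
      rw [prodRefl_nil] at heq
      exact heq
  | succ k ih =>
      intro L hlen hL lam mu hlam hmu heq
      by_cases hex : ∃ δ ∈ Dlt Rplus, prodRefl L δ ∈ -Rplus
      · obtain ⟨δ, hδ, hneg⟩ := hex
        have hinner0 : ⟪lam, δ⟫ = 0 := by
          have h1 : ⟪lam, δ⟫ = ⟪mu, prodRefl L δ⟫ := by
            rw [← heq, (prodRefl L).inner_map_map]
          have h2 : 0 ≤ ⟪mu, prodRefl L δ⟫ := by
            have := hmu (-(prodRefl L δ)) (mem_negS.1 hneg)
            rw [inner_neg_right] at this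
            linarith
          have h3 := hlam δ (mem_Dlt.1 hδ).1
          linarith [h1 ▸ h3]
        have hfix : rf δ lam = lam := by
          rw [rf_apply]
          have : pairv lam δ = 0 := by unfold pairv; rw [hinner0]; simp
          rw [this, zero_smul, sub_zero]
        obtain ⟨L', hL', hlen', heqL⟩ := keyD hfin hR hdisj h0 hrefl hcart hv L hL δ hδ hneg
        refine ih L' (by omega) hL' lam mu hlam hmu ?_
        rw [← heqL lam, hfix, heq]
      · push_neg at hex
        rcases List.eq_nil_or_concat L with rfl | ⟨L₀, δl, rfl⟩
        · rw [prodRefl_nil] at heq; exact heq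
        · have hδl : δl ∈ Dlt Rplus := hL δl (by
            rw [List.concat_eq_append]; exact List.mem_append.2 (Or.inr (List.mem_singleton_self δl)))
          have hL₀ : ∀ δ' ∈ L₀, δ' ∈ Dlt Rplus := fun δ' h => hL δ' (by
            rw [List.concat_eq_append]; exact List.mem_append.2 (Or.inl h))
          have hδl0 : δl ≠ 0 := r_ne_zero h0 (rplus_sub hR (mem_Dlt.1 hδl).1)
          have hrfneg : rf δl δl = -δl := by
            rw [rf_apply, pairv_self δl hδl0]
            module
          have hcat : prodRefl (L₀.concat δl) δl = -(prodRefl L₀ δl) := by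
            rw [List.concat_eq_append, prodRefl_append, prodRefl_cons, prodRefl_nil, hrfneg,
              map_neg]
          have hmemR : prodRefl L₀ δl ∈ R := prodRefl_mem_R hrefl
            (fun δ' h => rplus_sub hR (mem_Dlt.1 (hL₀ δ' h)).1) (rplus_sub hR (mem_Dlt.1 hδl).1)
          rw [hR] at hmemR
          rcases hmemR with hsig | hsig
          · exfalso
            refine hex δl hδl ?_
            rw [hcat]
            exact mem_negS.2 (by rwa [neg_neg])
          · obtain ⟨L', hL', hlen', heqL⟩ :=
              keyD hfin hR hdisj h0 hrefl hcart hv L₀ hL₀ δl hδl hsig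
            refine ih L' ?_ hL' lam mu hlam hmu ?_
            · have := List.length_concat (as := L₀) (a := δl)
              omega
            · rw [← heqL lam, ← heq, List.concat_eq_append, prodRefl_append, prodRefl_cons,
                prodRefl_nil]
lemma weyl_antidom_uniq (hfin : R.Finite) (hR : R = Rplus ∪ (-Rplus))
    (hdisj : Disjoint Rplus (-Rplus)) (h0 : (0 : V n) ∉ R)
    (hrefl : ∀ α ∈ R, ∀ β ∈ R, β - pairv β α • α ∈ R)
    (hcart : ∀ α ∈ R, ∀ β ∈ R, ∃ m : ℤ, pairv β α = m)
    (hv : ∀ α ∈ Rplus, 0 < ⟪v, α⟫)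
    {w : V n ≃ₗᵢ[ℝ] V n} (hw : w ∈ Weyl R) {lam mu : V n}
    (hlam : ∀ α ∈ Rplus, ⟪lam, α⟫ ≤ 0) (hmu : ∀ α ∈ Rplus, ⟪mu, α⟫ ≤ 0)
    (heq : w lam = mu) : lam = mu := by
  obtain ⟨L, hL, hLe⟩ := weyl_word hfin hR h0 hrefl hcart hv hw
  exact word_uniq hfin hR hdisj h0 hrefl hcart hv L.length L le_rfl hL lam mu hlam hmu
    (by rw [← hLe lam]; exact heq)

lemma weyl_mem_R (hfin : R.Finite) (hR : R = Rplus ∪ (-Rplus)) (h0 : (0 : V n) ∉ R)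
    (hrefl : ∀ α ∈ R, ∀ β ∈ R, β - pairv β α • α ∈ R)
    (hcart : ∀ α ∈ R, ∀ β ∈ R, ∃ m : ℤ, pairv β α = m)
    (hv : ∀ α ∈ Rplus, 0 < ⟪v, α⟫)
    {w : V n ≃ₗᵢ[ℝ] V n} (hw : w ∈ Weyl R) :
    (∀ β ∈ R, w β ∈ R) ∧ (∀ β ∈ R, w.symm β ∈ R) := by
  obtain ⟨L, hL, hLe⟩ := weyl_word hfin hR h0 hrefl hcart hv hw
  have hLR : ∀ δ' ∈ L, δ' ∈ R := fun δ' h => rplus_sub hR (mem_Dlt.1 (hL δ' h)).1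
  constructor
  · intro β hβ; rw [hLe]; exact prodRefl_mem_R hrefl hLR hβ
  · intro β hβ
    have hrev : ∀ δ' ∈ L.reverse, δ' ∈ R := fun δ' h => hLR δ' (List.mem_reverse.1 h)
    have hsymm : w.symm β = prodRefl L.reverse β :=
      (w.symm_apply_eq).2 (by rw [hLe, prodRefl_reverse] : w (prodRefl L.reverse β) = β).symm
    rw [hsymm]; exact prodRefl_mem_R hrefl hrev hβ

lemma inner_eq_pairv_mul {x α : V n} (hα : α ≠ 0) :
    ⟪x, α⟫ = pairv x α * (⟪α, α⟫ / 2) := by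
  have hA := inner_self_ne α hα
  unfold pairv
  generalize ⟪x, α⟫ = u at *
  generalize ⟪α, α⟫ = A at *
  field_simp

end RS2

end

set_option maxHeartbeats 2000000 in
/-- For any `c ∈ P` and `r ∈ O'` (so `π_r = ω_r u_r⁻¹ ∈ Π` is a nontrivial length-zero
element attached to a minuscule weight `ω_r`): `π_r π_c = π_b` for `b = π_r((c))`.
Moreover `u_b = u_c u_r`, `b = ω_r + u_r⁻¹(c)`, and `b₋ = c₋ + u_c w₀(ω_r)`; in
particular the latter weight always lies in `P₋`. -/
theorem pi_r_step (n : ℕ) (R Rplus : Set (V n))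
    (hfin : R.Finite) (hR : R = Rplus ∪ (-Rplus)) (hdisj : Disjoint Rplus (-Rplus))
    (h0 : (0 : V n) ∉ R)
    (hrefl : ∀ α ∈ R, ∀ β ∈ R, β - pairv β α • α ∈ R)
    (hcart : ∀ α ∈ R, ∀ β ∈ R, ∃ m : ℤ, pairv β α = m)
    (hpos : ∃ v : V n, ∀ α ∈ Rplus, 0 < ⟪v, α⟫)
    -- the minuscule weight `ω_r`, `r ∈ O'`, with `u_r` and `π_r = ω_r u_r⁻¹` of length 0
    (ωr : V n) (hωr_ne : ωr ≠ 0) (hωr_lat : inLat R ωr)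
    (hmin : ∀ α ∈ Rplus, pairv ωr α = 0 ∨ pairv ωr α = 1)
    (ur : V n ≃ₗᵢ[ℝ] V n) (hur : IsUb R Rplus ωr ur)
    (hlen0 : lamSet R Rplus (piE ur ωr) = ∅)
    -- the longest element `w₀` of `W`
    (w0 : V n ≃ₗᵢ[ℝ] V n) (hw0W : w0 ∈ Weyl R)
    (hw0 : ∀ α ∈ Rplus, w0 α ∈ -Rplus)
    (c : V n) (hc : inLat R c)
    (uc : V n ≃ₗᵢ[ℝ] V n) (huc : IsUb R Rplus c uc)
    (b : V n) (hbdef : b = (piE ur ωr).affAct c) :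
    ∃ ub : V n ≃ₗᵢ[ℝ] V n,
      IsUb R Rplus b ub ∧
      (piE ur ωr).mul (piE uc c) = piE ub b ∧
      (∀ z, ub z = uc (ur z)) ∧
      b = ωr + ur.symm c ∧
      ub b = uc c + uc (w0 ωr) ∧
      (∀ α ∈ Rplus, ⟪uc c + uc (w0 ωr), α⟫ ≤ 0) := by
  obtain ⟨v, hv⟩ := hpos
  obtain ⟨hurW, hurAD, hur3⟩ := hur
  obtain ⟨hucW, hucAD, huc3⟩ := huc
  have hsub : Rplus ⊆ R := rplus_sub hR
  have hurR := weyl_mem_R hfin hR h0 hrefl hcart hv hurW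
  have hucR := weyl_mem_R hfin hR h0 hrefl hcart hv hucW
  have hw0R := weyl_mem_R hfin hR h0 hrefl hcart hv hw0W
  -- b = ωr + ur.symm c
  have hb : b = ωr + ur.symm c := by
    rw [hbdef]
    show ur.symm (c + ur ωr) = ωr + ur.symm c
    rw [map_add, ur.symm_apply_apply, add_comm]
  have h_urb : ur b = ur ωr + c := by
    rw [hb, map_add, ur.apply_symm_apply, add_comm]
  -- ωr is dominant
  have hωr_dom : ∀ α ∈ Rplus, 0 ≤ ⟪ωr, α⟫ := by
    intro α hα
    have hα0 : α ≠ 0 := r_ne_zero h0 (hsub hα)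
    have hip := inner_self_pos' hα0
    rw [inner_eq_pairv_mul hα0]
    rcases hmin α hα with h | h <;> rw [h] <;> nlinarith
  -- w0.symm maps positives to negatives
  have hw0inv : ∀ α ∈ Rplus, w0.symm α ∈ -Rplus := by
    intro α hα
    have h1 : w0.symm α ∈ R := hw0R.2 α (hsub hα)
    rw [hR] at h1
    rcases h1 with h | h
    · exfalso
      have := hw0 _ h
      rw [w0.apply_symm_apply] at this
      exact Set.disjoint_left.1 hdisj hα this
    · exact h
  -- w0 ωr is antidominant
  have hw0ωr_AD : ∀ α ∈ Rplus, ⟪w0 ωr, α⟫ ≤ 0 := by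
    intro α hα
    have h1 : ⟪w0 ωr, α⟫ = ⟪ωr, w0.symm α⟫ := by
      conv_lhs => rw [show α = w0 (w0.symm α) from (w0.apply_symm_apply α).symm,
        w0.inner_map_map]
    have h3 : -(w0.symm α) ∈ Rplus := mem_negS.1 (hw0inv α hα)
    have h4 := hωr_dom _ h3
    rw [inner_neg_right] at h4
    linarith [h1 ▸ (by linarith : -⟪ωr, w0.symm α⟫ ≥ 0)]
  -- the key identity ur ωr = w0 ωr
  have hkey : ur ωr = w0 ωr := by
    refine weyl_antidom_uniq hfin hR hdisj h0 hrefl hcart hv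
      (mul_mem hw0W (inv_mem hurW)) hurAD hw0ωr_AD ?_
    show w0 (ur.symm (ur ωr)) = w0 ωr
    rw [ur.symm_apply_apply]
  -- the element ub
  have hubW : ur.trans uc ∈ Weyl R := mul_mem hucW hurW
  have hubb : (ur.trans uc) b = uc c + uc (w0 ωr) := by
    show uc (ur b) = _
    rw [h_urb, hkey, map_add, add_comm]
  -- antidominance of uc c + uc (w0 ωr)
  have hADb : ∀ α ∈ Rplus, ⟪uc c + uc (w0 ωr), α⟫ ≤ 0 := by
    intro α hα
    rw [inner_add_left]
    have hβR : uc.symm α ∈ R := hucR.2 α (hsub hα)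
    have hucw : ⟪uc (w0 ωr), α⟫ = ⟪w0 ωr, uc.symm α⟫ := by
      conv_lhs => rw [show α = uc (uc.symm α) from (uc.apply_symm_apply α).symm,
        uc.inner_map_map]
    have hucc : ⟪uc c, α⟫ ≤ 0 := hucAD α hα
    rw [hR] at hβR
    rcases hβR with hβ | hβ
    · have := hw0ωr_AD _ hβ
      linarith [hucw ▸ (by linarith : ⟪w0 ωr, uc.symm α⟫ ≤ 0)]
    · -- hard case
      have hγp : -(uc.symm α) ∈ Rplus := mem_negS.1 hβ
      set γ := -(uc.symm α) with hγdef
      have hsymmα : uc.symm α = -γ := by rw [hγdef, neg_neg]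
      have hucγ : uc γ = -α := by rw [hγdef, map_neg, uc.apply_symm_apply]
      have hucγneg : uc γ ∈ -Rplus := by
        rw [hucγ]; exact mem_negS.2 (by rwa [neg_neg])
      have hne0 : ⟪γ, c⟫ ≠ 0 := huc3 γ hγp hucγneg
      have h5 : ⟪uc c, α⟫ = -⟪c, γ⟫ := by
        conv_lhs => rw [show α = uc (uc.symm α) from (uc.apply_symm_apply α).symm,
          uc.inner_map_map, hsymmα, inner_neg_right]
      have hcomm : ⟪c, γ⟫ = ⟪γ, c⟫ := real_inner_comm γ c
      have hge : 0 ≤ ⟪γ, c⟫ := by rw [← hcomm]; linarith [h5 ▸ hucc]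
      have hγ0 : γ ≠ 0 := r_ne_zero h0 (hsub hγp)
      have hnuγ : 0 < nuv γ := by
        unfold nuv; have := inner_self_pos' hγ0; linarith
      obtain ⟨m, hm⟩ := hc γ (hsub hγp)
      have hgt : 0 < ⟪γ, c⟫ := lt_of_le_of_ne hge (Ne.symm hne0)
      have hmpos : (0:ℝ) < m := by
        rw [hm] at hgt; nlinarith
      have hm1 : (1:ℝ) ≤ m := by
        have : (1:ℤ) ≤ m := by exact_mod_cast hmpos
        exact_mod_cast this
      have hγc : nuv γ ≤ ⟪γ, c⟫ := by rw [hm]; nlinarith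
      -- second term bound
      have hwsγ : -(w0.symm γ) ∈ Rplus := mem_negS.1 (hw0inv γ hγp)
      have hwsγ0 : -(w0.symm γ) ≠ 0 := r_ne_zero h0 (hsub hwsγ)
      have hcanon : ⟪w0 ωr, γ⟫ = -⟪ωr, -(w0.symm γ)⟫ := by
        conv_lhs => rw [show γ = w0 (w0.symm γ) from (w0.apply_symm_apply γ).symm,
          w0.inner_map_map]
        rw [inner_neg_right, neg_neg]
      have hnueq : ⟪-(w0.symm γ), -(w0.symm γ)⟫ = ⟪γ, γ⟫ := by
        rw [inner_neg_neg, w0.symm.inner_map_map]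
      have h7 : -⟪w0 ωr, γ⟫ ≤ nuv γ := by
        rw [hcanon, neg_neg, inner_eq_pairv_mul hwsγ0, hnueq]
        rcases hmin _ hwsγ with h | h <;> rw [h] <;> unfold nuv <;> nlinarith [inner_self_pos' hγ0]
      have h6 : ⟪uc (w0 ωr), α⟫ = -⟪w0 ωr, γ⟫ := by
        rw [hucw, hsymmα, inner_neg_right]
      rw [h5, h6]
      linarith
  -- third IsUb condition for ub
  have hub3 : ∀ α ∈ Rplus, (ur.trans uc) α ∈ -Rplus → ⟪α, b⟫ ≠ 0 := by
    intro α hα hneg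
    have hiso : ⟪α, ur.symm c⟫ = ⟪ur α, c⟫ := by
      conv_rhs => rw [show c = ur (ur.symm c) from (ur.apply_symm_apply c).symm,
        ur.inner_map_map]
    have hbin : ⟪α, b⟫ = ⟪α, ωr⟫ + ⟪ur α, c⟫ := by
      rw [hb, inner_add_right, hiso]
    have hdomα : 0 ≤ ⟪α, ωr⟫ := by
      rw [real_inner_comm]; exact hωr_dom α hα
    have hurαR : ur α ∈ R := hurR.1 α (hsub hα)
    rw [hR] at hurαR
    rcases hurαR with hcase | hcase
    · have h1 : ⟪ur α, c⟫ ≠ 0 := huc3 (ur α) hcase hneg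
      have h2 : 0 ≤ ⟪ur α, c⟫ := by
        have hmem : -(uc (ur α)) ∈ Rplus := mem_negS.1 hneg
        have := hucAD _ hmem
        rw [inner_neg_right, uc.inner_map_map] at this
        rw [real_inner_comm]
        linarith
      have : 0 < ⟪α, ωr⟫ + ⟪ur α, c⟫ := by
        rcases lt_or_eq_of_le h2 with h | h
        · linarith
        · exact absurd h.symm h1
      rw [hbin]; exact this.ne'
    · have h1 : ⟪α, ωr⟫ ≠ 0 := hur3 α hα hcase
      have h4 : 0 < ⟪α, ωr⟫ := lt_of_le_of_ne hdomα (Ne.symm h1)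
      have hγp : -(ur α) ∈ Rplus := mem_negS.1 hcase
      have hucγ : uc (-(ur α)) ∈ Rplus := by
        rw [map_neg]; exact mem_negS.1 hneg
      have h5 : ⟪c, -(ur α)⟫ ≤ 0 := by
        have := hucAD _ hucγ
        rwa [uc.inner_map_map] at this
      have h6 : 0 ≤ ⟪ur α, c⟫ := by
        rw [inner_neg_right] at h5
        rw [real_inner_comm]
        linarith
      rw [hbin]
      exact (by linarith : 0 < ⟪α, ωr⟫ + ⟪ur α, c⟫).ne'
  -- assemble
  refine ⟨ur.trans uc, ⟨hubW, fun α hα => by rw [hubb]; exact hADb α hα, hub3⟩, ?_,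
    fun z => rfl, hb, hubb, hADb⟩
  have hw : (uc.symm).trans (ur.symm) = (ur.trans uc).symm := rfl
  have hb2 : uc.symm.symm (ur ωr) + uc c = (ur.trans uc) b := by
    show uc (ur ωr) + uc c = uc (ur b)
    rw [h_urb, map_add]
  show ExtElem.mk ((uc.symm).trans (ur.symm)) (uc.symm.symm (ur ωr) + uc c)
      = ExtElem.mk (ur.trans uc).symm ((ur.trans uc) b)
  rw [hw, hb2]
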